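/- Let ι' and ι be finite index types, φ : ι' → ι any function, and p', q' : ι' → ℝ positive vectors. Define p, q : ι → ℝ by p_r = Σ_{i : φ(i) = r} p'_i and q_r = Σ_{i : φ(i) = r} q'_i. Then for every λ ∈ (0,1), Σ_{r∈ι} p_r^{1-λ} q_r^{λ} ≥ Σ_{i∈ι'} p'_i^{1-λ} q'_i^{λ}. -/

import Mathlib

/-- Arbitrary deterministic merging of cells via a map `φ : ι' → ι` cannot
increase the Chernoff-type sum: with the pushforwards
`p r = ∑_{i : φ i = r} p' i` and `q r = ∑_{i : φ i = r} q' i`, for every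
`λ ∈ (0,1)`, `∑ r, p r ^ (1-λ) * q r ^ λ ≥ ∑ i, p' i ^ (1-λ) * q' i ^ λ`. -/
theorem pushforward_chernoff_sum_ge
    (ι' ι : Type*) [Fintype ι'] [Fintype ι] [DecidableEq ι]
    (φ : ι' → ι)
    (p' q' : ι' → ℝ) (hp' : ∀ i, 0 < p' i) (hq' : ∀ i, 0 < q' i)
    (p q : ι → ℝ)
    (hp : ∀ r, p r = ∑ i ∈ Finset.univ.filter (fun i => φ i = r), p' i)
    (hq : ∀ r, q r = ∑ i ∈ Finset.univ.filter (fun i => φ i = r), q' i)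
    (l : ℝ) (hl : l ∈ Set.Ioo (0 : ℝ) 1) :
    ∑ r, p r ^ (1 - l) * q r ^ l ≥ ∑ i, p' i ^ (1 - l) * q' i ^ l := by
  obtain ⟨hl0, hl1⟩ := hl
  have h1l : (0:ℝ) < 1 - l := by linarith
  rw [← Finset.sum_fiberwise (g := φ) (f := fun i => p' i ^ (1 - l) * q' i ^ l)]
  apply Finset.sum_le_sum
  intro r _
  set S := Finset.univ.filter (fun i => φ i = r)
  have hconj : Real.HolderConjugate (1/(1-l)) (1/l) := by
    constructor
    · rw [one_div, one_div, inv_inv, inv_inv, inv_one]; ring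
    · exact div_pos one_pos h1l
    · exact div_pos one_pos hl0
  calc ∑ i ∈ S, p' i ^ (1 - l) * q' i ^ l
      ≤ (∑ i ∈ S, (p' i ^ (1 - l)) ^ (1/(1-l))) ^ (1/(1/(1-l)))
        * (∑ i ∈ S, (q' i ^ l) ^ (1/l)) ^ (1/(1/l)) :=
        Real.inner_le_Lp_mul_Lq_of_nonneg S hconj
          (fun i _ => (Real.rpow_pos_of_pos (hp' i) _).le)
          (fun i _ => (Real.rpow_pos_of_pos (hq' i) _).le)
    _ = p r ^ (1 - l) * q r ^ l := by
        rw [hp, hq, one_div_one_div, one_div_one_div]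
        congr 2
        · apply Finset.sum_congr rfl; intro i _
          rw [← Real.rpow_mul (hp' i).le, mul_one_div, div_self h1l.ne', Real.rpow_one]
        · apply Finset.sum_congr rfl; intro i _
          rw [← Real.rpow_mul (hq' i).le, mul_one_div, div_self hl0.ne', Real.rpow_one]
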